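/- Let (F,σ) be a difference field and (F(t),σ) a ΠΣ-field extension (i.e., σ(t) = α·t + β with α = 1 or (α ∈ F*, β = 0), and const(F(t),σ) = const(F,σ)). If (F,σ) is constant-stable, then (F(t),σ) is constant-stable. -/
import Mathlib


/-- A ΠΣ-field extension `F(t)` of a constant-stable difference field `F` is
constant-stable. -/
theorem stmt_4 (F : Type*) [Field F] [CharZero F] (σ : F ≃+* F)
    (σ' : RatFunc F ≃+* RatFunc F) (α β : F)
    (hαβ : α = 1 ∨ (α ≠ 0 ∧ β = 0))
    (hC : ∀ c : F, σ' (algebraMap F (RatFunc F) c) = algebraMap F (RatFunc F) (σ c))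
    (hX : σ' RatFunc.X = algebraMap F (RatFunc F) α * RatFunc.X + algebraMap F (RatFunc F) β)
    (hconst : ∀ f : RatFunc F, σ' f = f → ∃ c : F, σ c = c ∧ f = algebraMap F (RatFunc F) c)
    (hcs : ∀ k : ℕ, 1 ≤ k → ∀ c : F, (⇑σ)^[k] c = c → σ c = c) :
    ∀ k : ℕ, 1 ≤ k → ∀ f : RatFunc F, (⇑σ')^[k] f = f → σ' f = f := by
  intro k hk f hf
  classical
  have halg : ∀ (n : ℕ) (a : F), (⇑σ')^[n] (algebraMap F (RatFunc F) a)
      = algebraMap F (RatFunc F) ((⇑σ)^[n] a) := by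
    intro n
    induction n with
    | zero => intro a; simp
    | succ n ih =>
      intro a
      rw [Function.iterate_succ_apply', Function.iterate_succ_apply', ih, hC]
  set g : ℕ → RatFunc F := fun i => (⇑σ')^[i] f with hgdef
  have hg0 : g 0 = f := rfl
  have hgs : ∀ i, σ' (g i) = g (i + 1) := fun i =>
    (Function.iterate_succ_apply' (⇑σ') i f).symm
  have hgk : g k = g 0 := hf
  set Q : Polynomial (RatFunc F) :=
    ∏ i ∈ Finset.range k, (Polynomial.X - Polynomial.C (g i)) with hQ
  have hQmonic : Q.Monic :=
    Polynomial.monic_prod_of_monic _ _ fun i _ => Polynomial.monic_X_sub_C _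
  -- Q is invariant under σ' applied to coefficients
  have hQmap : Q.map (σ' : RatFunc F →+* RatFunc F) = Q := by
    have hne : (Polynomial.X - Polynomial.C (g 0) : Polynomial (RatFunc F)) ≠ 0 :=
      Polynomial.X_sub_C_ne_zero _
    have key :
        (∏ i ∈ Finset.range k, (Polynomial.X - Polynomial.C (g (i + 1))))
          * (Polynomial.X - Polynomial.C (g 0))
        = (∏ i ∈ Finset.range k, (Polynomial.X - Polynomial.C (g i)))
          * (Polynomial.X - Polynomial.C (g 0)) := by
      rw [← Finset.prod_range_succ' (fun i => Polynomial.X - Polynomial.C (g i)) k,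
        Finset.prod_range_succ, hgk]
    rw [hQ, Polynomial.map_prod]
    simp only [Polynomial.map_sub, Polynomial.map_X, Polynomial.map_C]
    simp only [RingEquiv.coe_toRingHom, hgs]
    exact mul_right_cancel₀ hne key
  -- every coefficient of Q is fixed by σ', hence lies in the image of F
  have hcoeff : ∀ n, Q.coeff n ∈ Set.range (algebraMap F (RatFunc F)) := by
    intro n
    have h1 : σ' (Q.coeff n) = Q.coeff n := by
      conv_rhs => rw [← hQmap]
      rw [Polynomial.coeff_map]
      rfl
    obtain ⟨c, -, hc⟩ := hconst _ h1
    exact ⟨c, hc.symm⟩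
  -- f is integral over F
  have hint : IsIntegral F f := by
    obtain ⟨q, hqmap, -, hqmonic⟩ :=
      Polynomial.lifts_and_degree_eq_and_monic
        ((Polynomial.lifts_iff_coeff_lifts Q).mpr hcoeff) hQmonic
    refine ⟨q, hqmonic, ?_⟩
    rw [show Polynomial.eval₂ (algebraMap F (RatFunc F)) f q
        = (q.map (algebraMap F (RatFunc F))).eval f from (Polynomial.eval_map _ _).symm,
      hqmap, hQ, Polynomial.eval_prod]
    refine Finset.prod_eq_zero (Finset.mem_range.mpr hk) ?_
    simp [hg0]
  -- F is integrally closed in RatFunc F, so f comes from F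
  obtain ⟨a, ha⟩ : ∃ a : F, algebraMap F (RatFunc F) a = f := by
    have hint' : IsIntegral (Polynomial F) f := hint.tower_top
    obtain ⟨p, hp⟩ := IsIntegrallyClosed.isIntegral_iff.mp hint'
    have hpint : IsIntegral F p := by
      rw [← isIntegral_algebraMap_iff
        (IsFractionRing.injective (Polynomial F) (RatFunc F)), hp]
      exact hint
    obtain ⟨q, hqmonic, hq⟩ := hpint
    have hq' : q.comp p = 0 := by
      rw [Polynomial.algebraMap_eq] at hq
      exact hq
    rcases Polynomial.comp_eq_zero_iff.mp hq' with h | ⟨-, h⟩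
    · exact absurd h hqmonic.ne_zero
    · refine ⟨p.coeff 0, ?_⟩
      rw [← hp, h, IsScalarTower.algebraMap_apply F (Polynomial F) (RatFunc F),
        Polynomial.algebraMap_eq]
      simp
  -- conclude using constant-stability of F
  have hak : (⇑σ)^[k] a = a := by
    have := hf
    rw [← ha, halg] at this
    exact (algebraMap F (RatFunc F)).injective this
  rw [← ha, hC, hcs k hk a hak]
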